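/- Let A be a unital C*-algebra and a ∈ A right invertible. If a ≤◇ b for some b ∈ A, then a = b. -/

import Mathlib

/-- The diamond relation: `a ≤◇ b` iff `aA ⊆ bA`, `Aa ⊆ Ab`, and `a a* a = a b* a`. -/
def Diamond {A : Type*} [CStarAlgebra A] (a b : A) : Prop :=
  (∀ x : A, ∃ y : A, a * x = b * y) ∧
  (∀ x : A, ∃ y : A, x * a = y * b) ∧
  a * star a * a = a * star b * a

theorem diamond_eq_of_rightInvertible {A : Type*} [CStarAlgebra A] (a b : A)
    (hr : ∃ c : A, a * c = 1) (h : Diamond a b) : a = b := by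
  letI := CStarAlgebra.spectralOrder A
  letI := CStarAlgebra.spectralOrderedRing A
  nontriviality A
  obtain ⟨c, hc⟩ := hr
  obtain ⟨h1, h2, h3⟩ := h
  -- From the third condition, multiplying by c on the right: a a* = a b*, hence a a* = b a*.
  have key : a * star a = b * star a := by
    have e1 : a * star a * (a * c) = a * star b * (a * c) := by
      rw [← mul_assoc, ← mul_assoc, h3]
    rw [hc, mul_one, mul_one] at e1
    calc a * star a = star (a * star a) := by
          simp [star_mul]
      _ = star (a * star b) := by rw [e1]
      _ = b * star a := by simp [star_mul]
  -- a (c c*) a* = 1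
  have h1' : a * (c * star c) * star a = 1 := by
    have : a * (c * star c) * star a = (a * c) * star (a * c) := by
      simp [star_mul, mul_assoc]
    rw [this, hc, star_one, mul_one]
  set r : ℝ := ‖c * star c‖ with hrdef
  have hr0 : 0 < r := by
    rw [hrdef, norm_pos_iff]
    intro hz
    rw [hz, mul_zero, zero_mul] at h1'
    exact zero_ne_one h1'
  have hle : c * star c ≤ algebraMap ℝ A r :=
    IsSelfAdjoint.le_algebraMap_norm_self (IsSelfAdjoint.mul_star_self c)
  have hconj : a * (c * star c) * star a ≤ a * algebraMap ℝ A r * star a :=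
    star_right_conjugate_le_conjugate hle a
  rw [h1'] at hconj
  have hsm : a * algebraMap ℝ A r * star a = r • (a * star a) := by
    rw [Algebra.algebraMap_eq_smul_one]
    simp [mul_smul_comm, smul_mul_assoc]
  rw [hsm] at hconj
  -- hence r⁻¹ • 1 ≤ a a*, so a a* is invertible
  have hle2 : r⁻¹ • (1 : A) ≤ a * star a := by
    have := smul_le_smul_of_nonneg_left hconj (by positivity : (0:ℝ) ≤ r⁻¹)
    rwa [smul_smul, inv_mul_cancel₀ hr0.ne', one_smul] at this
  have hunit : IsUnit (a * star a) := by
    refine CStarAlgebra.isUnit_of_le _ hle2 ?_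
    exact IsStrictlyPositive.smul (by positivity) isStrictlyPositive_one
  obtain ⟨u, hu⟩ := hunit
  -- s := a* * u⁻¹ is a common right inverse of a and b
  set s : A := star a * (↑u⁻¹ : A) with hsdef
  have has : a * s = 1 := by
    rw [hsdef, ← mul_assoc, ← hu]
    exact u.mul_inv
  have hbs : b * s = 1 := by
    rw [hsdef, ← mul_assoc, ← key, ← hu]
    exact u.mul_inv
  obtain ⟨y, hy⟩ := h2 1
  rw [one_mul] at hy
  have : a * s = y * (b * s) := by rw [hy, mul_assoc]
  rw [has, hbs, mul_one] at this
  rw [hy, ← this, one_mul]
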